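/- Let X be a Banach space, A a linear operator on X, b ∈ X, B ∈ L(ℂ,X) defined by Bu = b·u, and F ∈ L(X,ℂ). For every n ≥ 1: if x ∈ D(Aⁿ) and b ∈ D(A^{n-1}), then x ∈ D((A+BF)ⁿ) and (A+BF)ⁿ x = Aⁿ x + q_{n-1} A^{n-1} b + ⋯ + q₀ b, where q_m = F (A+BF)^{n-m-1} x ∈ ℂ for m = 0,…,n-1. -/
import Mathlib


/-- `IterRel D A n x y` means that `x` belongs to the domain of the `n`-th power of the
(possibly unbounded) linear operator `A` with domain `D`, and `Aⁿ x = y`. -/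
inductive IterRel {X : Type*} [NormedAddCommGroup X] [NormedSpace ℂ X]
    (D : Submodule ℂ X) (A : D →ₗ[ℂ] X) : ℕ → X → X → Prop
  | zero (x : X) : IterRel D A 0 x x
  | succ (n : ℕ) (x y : X) (hy : y ∈ D) :
      IterRel D A n x y → IterRel D A (n + 1) x (A ⟨y, hy⟩)

theorem IterRel.unique {X : Type*} [NormedAddCommGroup X] [NormedSpace ℂ X]
    {D : Submodule ℂ X} {A : D →ₗ[ℂ] X} :
    ∀ {n : ℕ} {x y z : X}, IterRel D A n x y → IterRel D A n x z → y = z := by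
  intro n
  induction n with
  | zero => intro x y z hy hz; cases hy; cases hz; rfl
  | succ n ih =>
    intro x y z hy hz
    cases hy with
    | succ _ _ y' hy' h1 =>
      cases hz with
      | succ _ _ z' hz' h2 =>
        have h := ih h1 h2
        subst h
        rfl

theorem power_aux
    {X : Type*} [NormedAddCommGroup X] [NormedSpace ℂ X]
    (D : Submodule ℂ X) (A : D →ₗ[ℂ] X) (b : X) (F : X →L[ℂ] ℂ) :
    ∀ (n : ℕ) (x xn : X) (bv : ℕ → X),
    IterRel D A n x xn →
    bv 0 = b →
    (∀ m : ℕ, m + 1 ≤ n → IterRel D A m b (bv m)) →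
    ∃ (w : X) (q : ℕ → ℂ),
      IterRel D (A + ((F.toLinearMap.comp D.subtype).smulRight b)) n x w ∧
      (∀ m : ℕ, m < n → ∃ z : X,
        IterRel D (A + ((F.toLinearMap.comp D.subtype).smulRight b)) (n - m - 1) x z ∧
        q m = F z) ∧
      w = xn + ∑ m ∈ Finset.range n, q m • bv m := by
  intro n
  induction n with
  | zero =>
    intro x xn bv hx hb0 hb
    cases hx
    exact ⟨x, 0, IterRel.zero x, by simp, by simp⟩
  | succ n ih =>
    intro x xn bv hx hb0 hb
    set T := A + ((F.toLinearMap.comp D.subtype).smulRight b) with hT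
    cases hx with
    | succ _ _ y hy h =>
      obtain ⟨w', q', hTw', hq', hw'eq⟩ :=
        ih x y bv h hb0 (fun m hm => hb m (by omega))
      -- membership of `bv m` in `D` for `m < n`
      have hmem : ∀ m, m < n → bv m ∈ D := by
        intro m hm
        have h1 : IterRel D A (m + 1) b (bv (m + 1)) := hb (m + 1) (by omega)
        generalize bv (m + 1) = c at h1
        cases h1 with
        | succ _ _ y' hy' h2 =>
          have : y' = bv m := IterRel.unique h2 (hb m (by omega))
          rw [← this]; exact hy'
      -- `A` applied to intermediate `b`-iterates
      have hAbv : ∀ m (hm : m < n), A ⟨bv m, hmem m hm⟩ = bv (m + 1) := by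
        intro m hm
        exact IterRel.unique (IterRel.succ m b (bv m) (hmem m hm) (hb m (by omega)))
          (hb (m + 1) (by omega))
      -- the `D`-valued `b`-iterates
      set g : ℕ → D := fun m => if hm : m < n then ⟨bv m, hmem m hm⟩ else 0 with hg
      have hw'D : w' ∈ D := by
        rw [hw'eq]
        exact D.add_mem hy (Submodule.sum_mem _ fun m hm =>
          D.smul_mem _ (hmem m (Finset.mem_range.mp hm)))
      have hsub : (⟨w', hw'D⟩ : D) = ⟨y, hy⟩ + ∑ m ∈ Finset.range n, q' m • g m := by
        apply Subtype.ext
        push_cast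
        rw [hw'eq]
        congr 1
        apply Finset.sum_congr rfl
        intro m hm
        rw [hg]
        simp [Finset.mem_range.mp hm]
      refine ⟨T ⟨w', hw'D⟩, fun m => if m = 0 then F w' else q' (m - 1),
        IterRel.succ n x w' hw'D hTw', ?_, ?_⟩
      · intro m hm
        rcases Nat.eq_zero_or_pos m with h0 | h0
        · subst h0
          refine ⟨w', ?_, by simp⟩
          simpa using hTw'
        · obtain ⟨z, hz1, hz2⟩ := hq' (m - 1) (by omega)
          refine ⟨z, ?_, by simp [Nat.pos_iff_ne_zero.mp h0, hz2]⟩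
          have heq : n + 1 - m - 1 = n - (m - 1) - 1 := by omega
          rw [heq]; exact hz1
      · have hTapp : T ⟨w', hw'D⟩ = A ⟨w', hw'D⟩ + F w' • b := by
          simp [hT]
        have hsum : ∀ m ∈ Finset.range n, A (q' m • g m) = q' m • bv (m + 1) := by
          intro m hm
          have hm' := Finset.mem_range.mp hm
          rw [map_smul, hg]
          simp only [hm', dif_pos]
          rw [hAbv m hm']
        rw [hTapp, hsub, map_add, map_sum, Finset.sum_congr rfl hsum,
          Finset.sum_range_succ']
        simp only [Nat.add_sub_cancel, Nat.succ_ne_zero, if_false, if_true, hb0]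
        abel

/-- If `x ∈ D(Aⁿ)` and `b ∈ D(A^{n-1})`, then `x ∈ D((A+BF)ⁿ)` and
`(A+BF)ⁿ x = Aⁿ x + q_{n-1} A^{n-1} b + ⋯ + q₀ b` with `q_m = F (A+BF)^{n-m-1} x`,
where `B : ℂ → X` is `u ↦ u • b` and `F : X → ℂ` is bounded. -/
theorem power_of_rank_one_perturbation
    {X : Type*} [NormedAddCommGroup X] [NormedSpace ℂ X]
    (D : Submodule ℂ X) (A : D →ₗ[ℂ] X) (b : X) (F : X →L[ℂ] ℂ)
    (n : ℕ) (hn : 1 ≤ n) (x xn : X) (bv : ℕ → X)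
    (hx : IterRel D A n x xn)
    (hb0 : bv 0 = b)
    (hb : ∀ m : ℕ, m ≤ n - 1 → IterRel D A m b (bv m)) :
    ∃ (w : X) (q : ℕ → ℂ),
      IterRel D (A + ((F.toLinearMap.comp D.subtype).smulRight b)) n x w ∧
      (∀ m : ℕ, m < n → ∃ z : X,
        IterRel D (A + ((F.toLinearMap.comp D.subtype).smulRight b)) (n - m - 1) x z ∧
        q m = F z) ∧
      w = xn + ∑ m ∈ Finset.range n, q m • bv m := by
  exact power_aux D A b F n x xn bv hx hb0 (fun m hm => hb m (by omega))
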